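/- (Nonresonance in Region 1.) Let a, b be real numbers with b² < 4a, let α ∈ ℂ satisfy α⁴ − bα² + a = 0, and let k ≥ 2 be an integer. Then (kα)⁴ − b(kα)² + a ≠ 0. Hence the recursion relation p(kα)·a_k = F₁^{(k)} + F₂^{(k)} uniquely determines the coefficient a_k for every k ≥ 2. -/

import Mathlib

/-- Nonresonance in Region 1 (`b² < 4a`): if `α` is a root of `λ⁴ − bλ² + a` and
`k ≥ 2` is an integer, then `p(kα) = (kα)⁴ − b(kα)² + a ≠ 0`; hence the recursion
`p(kα)·a_k = F₁⁽ᵏ⁾ + F₂⁽ᵏ⁾` uniquely determines the coefficient `a_k` for every `k ≥ 2`. -/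
theorem region1_nonresonance (a b : ℝ) (hab : b ^ 2 < 4 * a) (α : ℂ)
    (hα : α ^ 4 - (b : ℂ) * α ^ 2 + (a : ℂ) = 0) (k : ℕ) (hk : 2 ≤ k) :
    ((k : ℂ) * α) ^ 4 - (b : ℂ) * ((k : ℂ) * α) ^ 2 + (a : ℂ) ≠ 0 ∧
    ∀ F x y : ℂ,
      (((k : ℂ) * α) ^ 4 - (b : ℂ) * ((k : ℂ) * α) ^ 2 + (a : ℂ)) * x = F →
      (((k : ℂ) * α) ^ 4 - (b : ℂ) * ((k : ℂ) * α) ^ 2 + (a : ℂ)) * y = F →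
      x = y := by
  have ha : 0 < a := by nlinarith [sq_nonneg b]
  have hkR : (2 : ℝ) ≤ (k : ℝ) := by exact_mod_cast hk
  have hmain : ((k : ℂ) * α) ^ 4 - (b : ℂ) * ((k : ℂ) * α) ^ 2 + (a : ℂ) ≠ 0 := by
    intro h0
    set β : ℂ := α ^ 2 with hβ
    have h1 : β ^ 2 - (b : ℂ) * β + (a : ℂ) = 0 := by
      rw [hβ]; linear_combination hα
    have hβ0 : β ≠ 0 := by
      intro h
      rw [h] at h1
      have : (a : ℂ) = 0 := by linear_combination h1
      have : a = 0 := by exact_mod_cast this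
      linarith
    have h2 : ((k : ℂ) ^ 2 - 1) * (((k : ℂ) ^ 2 + 1) * β - (b : ℂ)) * β = 0 := by
      rw [hβ]; linear_combination h0 - hα
    have hk1 : ((k : ℂ) ^ 2 - 1) ≠ 0 := by
      have : ((k : ℂ) ^ 2 - 1) = (((k : ℝ) ^ 2 - 1 : ℝ) : ℂ) := by push_cast; ring
      rw [this, Complex.ofReal_ne_zero]
      nlinarith
    have h3 : ((k : ℂ) ^ 2 + 1) * β - (b : ℂ) = 0 := by
      rcases mul_eq_zero.mp h2 with h | h
      · rcases mul_eq_zero.mp h with h | h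
        · exact absurd h hk1
        · exact h
      · exact absurd h hβ0
    set r : ℝ := b / ((k : ℝ) ^ 2 + 1) with hr
    have hkpos : (0 : ℝ) < (k : ℝ) ^ 2 + 1 := by positivity
    have hβr : β = (r : ℂ) := by
      have hne : ((k : ℂ) ^ 2 + 1) ≠ 0 := by
        have : ((k : ℂ) ^ 2 + 1) = (((k : ℝ) ^ 2 + 1 : ℝ) : ℂ) := by push_cast; ring
        rw [this, Complex.ofReal_ne_zero]; linarith
      rw [hr]; push_cast; rw [eq_div_iff hne]
      linear_combination h3
    rw [hβr] at h1
    have hreal : r ^ 2 - b * r + a = 0 := by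
      exact_mod_cast (by push_cast at h1 ⊢; exact_mod_cast h1 : ((r ^ 2 - b * r + a : ℝ) : ℂ) = 0)
    nlinarith [sq_nonneg (2 * r - b)]
  refine ⟨hmain, fun F x y hx hy => ?_⟩
  exact mul_left_cancel₀ hmain (hx.trans hy.symm)
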